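/- arXiv:2303.11253 — 2 statements merged into one kernel-verified Lean document; each statement's English description precedes it below -/
import Mathlib

section
/- Let (Ω, μ) be a probability space, let E = EuclideanSpace ℝ (Fin n), let Y₁ : Ω → E, X : Ω → E, and e₂ : Ω → E be random vectors with Y₂ := X + e₂, such that e₂ has zero mean and e₂ is independent of the pair (Y₁, X). Let f, g : E → E be measurable functions such that f ∘ Y₁, g ∘ Y₁, X, and e₂ are all square-integrable. Then ∫ ‖f (Y₁ ω) − Y₂ ω‖² dμ ≤ ∫ ‖g (Y₁ ω) − Y₂ ω‖² dμ if and only if ∫ ‖f (Y₁ ω) − X ω‖² dμ ≤ ∫ ‖g (Y₁ ω) − X ω‖² dμ. -/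
open MeasureTheory ProbabilityTheory

lemma n2n_key {Ω : Type*} [MeasurableSpace Ω] {μ : Measure Ω} [IsProbabilityMeasure μ]
    {n : ℕ} (W e₂ : Ω → EuclideanSpace ℝ (Fin n))
    (hW : MemLp W 2 μ) (he2 : MemLp e₂ 2 μ)
    (he0 : ∫ ω, e₂ ω ∂μ = 0)
    (hindep : IndepFun W e₂ μ) :
    ∫ ω, ‖W ω - e₂ ω‖ ^ 2 ∂μ = ∫ ω, ‖W ω‖ ^ 2 ∂μ + ∫ ω, ‖e₂ ω‖ ^ 2 ∂μ := by
  classical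
  -- coordinate functions
  have hWi : ∀ i : Fin n, MemLp (fun ω => W ω i) 2 μ := fun i =>
    (EuclideanSpace.proj (𝕜 := ℝ) i).comp_memLp' hW
  have hei : ∀ i : Fin n, MemLp (fun ω => e₂ ω i) 2 μ := fun i =>
    (EuclideanSpace.proj (𝕜 := ℝ) i).comp_memLp' he2
  have hindep_i : ∀ i : Fin n, IndepFun (fun ω => W ω i) (fun ω => e₂ ω i) μ := fun i =>
    hindep.comp (EuclideanSpace.proj (𝕜 := ℝ) i).measurable
      (EuclideanSpace.proj (𝕜 := ℝ) i).measurable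
  have hmul_int : ∀ i : Fin n, Integrable (fun ω => W ω i * e₂ ω i) μ := fun i =>
    (hindep_i i).integrable_mul ((hWi i).integrable one_le_two)
      ((hei i).integrable one_le_two)
  have he2_int : Integrable e₂ μ := he2.integrable one_le_two
  have hei0 : ∀ i : Fin n, ∫ ω, e₂ ω i ∂μ = 0 := by
    intro i
    have := (EuclideanSpace.proj (𝕜 := ℝ) i).integral_comp_comm he2_int
    simpa [he0] using this
  have hinner_eq : ∀ ω, (inner ℝ (W ω) (e₂ ω) : ℝ) = ∑ i, W ω i * e₂ ω i := by
    intro ω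
    simp [PiLp.inner_apply, RCLike.inner_apply, mul_comm]
  have hinner_int : Integrable (fun ω => (inner ℝ (W ω) (e₂ ω) : ℝ)) μ := by
    simp only [hinner_eq]
    exact integrable_finset_sum _ fun i _ => hmul_int i
  have hinner0 : ∫ ω, (inner ℝ (W ω) (e₂ ω) : ℝ) ∂μ = 0 := by
    simp only [hinner_eq]
    rw [integral_finset_sum _ fun i _ => hmul_int i]
    refine Finset.sum_eq_zero fun i _ => ?_
    have := (hindep_i i).integral_mul_eq_mul_integral ((hWi i).aestronglyMeasurable)
      ((hei i).aestronglyMeasurable)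
    simpa [hei0 i] using this
  have hWsq : Integrable (fun ω => ‖W ω‖ ^ 2) μ := by
    convert hW.integrable_norm_rpow two_ne_zero ENNReal.ofNat_ne_top with ω
    rw [ENNReal.toReal_ofNat, ← Real.rpow_natCast]
    norm_num
  have hesq : Integrable (fun ω => ‖e₂ ω‖ ^ 2) μ := by
    convert he2.integrable_norm_rpow two_ne_zero ENNReal.ofNat_ne_top with ω
    rw [ENNReal.toReal_ofNat, ← Real.rpow_natCast]
    norm_num
  have hexp : ∀ ω, ‖W ω - e₂ ω‖ ^ 2
      = ‖W ω‖ ^ 2 - 2 * (inner ℝ (W ω) (e₂ ω) : ℝ) + ‖e₂ ω‖ ^ 2 := fun ω =>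
    norm_sub_sq_real _ _
  simp only [hexp]
  have hc : Integrable (fun ω => 2 * (inner ℝ (W ω) (e₂ ω) : ℝ)) μ := hinner_int.const_mul 2
  have hsub : Integrable (fun ω => ‖W ω‖ ^ 2 - 2 * (inner ℝ (W ω) (e₂ ω) : ℝ)) μ := hWsq.sub hc
  rw [integral_add hsub hesq, integral_sub hWsq hc, integral_const_mul, hinner0]
  ring

theorem noise2noise_risk_comparison
    {Ω : Type*} [MeasurableSpace Ω] {μ : Measure Ω} [IsProbabilityMeasure μ]
    {n : ℕ} (Y₁ X e₂ : Ω → EuclideanSpace ℝ (Fin n))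
    (Y₂ : Ω → EuclideanSpace ℝ (Fin n)) (hY₂ : Y₂ = fun ω => X ω + e₂ ω)
    (he0 : ∫ ω, e₂ ω ∂μ = 0)
    (hindep : IndepFun (fun ω => (Y₁ ω, X ω)) e₂ μ)
    (f g : EuclideanSpace ℝ (Fin n) → EuclideanSpace ℝ (Fin n))
    (hf : Measurable f) (hg : Measurable g)
    (hfY : MemLp (fun ω => f (Y₁ ω)) 2 μ) (hgY : MemLp (fun ω => g (Y₁ ω)) 2 μ)
    (hX : MemLp X 2 μ) (he2 : MemLp e₂ 2 μ) :
    (∫ ω, ‖f (Y₁ ω) - Y₂ ω‖ ^ 2 ∂μ ≤ ∫ ω, ‖g (Y₁ ω) - Y₂ ω‖ ^ 2 ∂μ) ↔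
      (∫ ω, ‖f (Y₁ ω) - X ω‖ ^ 2 ∂μ ≤ ∫ ω, ‖g (Y₁ ω) - X ω‖ ^ 2 ∂μ) := by
  have key : ∀ h : EuclideanSpace ℝ (Fin n) → EuclideanSpace ℝ (Fin n), Measurable h →
      MemLp (fun ω => h (Y₁ ω)) 2 μ →
      ∫ ω, ‖h (Y₁ ω) - Y₂ ω‖ ^ 2 ∂μ
        = ∫ ω, ‖h (Y₁ ω) - X ω‖ ^ 2 ∂μ + ∫ ω, ‖e₂ ω‖ ^ 2 ∂μ := by
    intro h hh hhY
    have hind : IndepFun (fun ω => h (Y₁ ω) - X ω) e₂ μ :=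
      hindep.comp ((hh.comp measurable_fst).sub measurable_snd) measurable_id
    have := n2n_key (fun ω => h (Y₁ ω) - X ω) e₂ (hhY.sub hX) he2 he0 hind
    simpa [hY₂, sub_add_eq_sub_sub] using this
  rw [key f hf hfY, key g hg hgY]
  constructor <;> intro hle <;> linarith
end

section
/- Let (Ω, μ) be a probability space, let E = EuclideanSpace ℝ (Fin n), let Y₁ : Ω → E, X : Ω → E, and e₂ : Ω → E be random vectors with Y₂ := X + e₂, such that e₂ has zero mean and e₂ is independent of the pair (Y₁, X). Let Θ be a type and F : Θ → E → E a parametrized family of measurable functions such that for every θ, F θ ∘ Y₁ is square-integrable, and X and e₂ are square-integrable. Define the Noise2Clean risk R_N2C(θ) = ∫ ‖F θ (Y₁ ω) − X ω‖² dμ and the Noise2Noise risk R_N2N(θ) = ∫ ‖F θ (Y₁ ω) − Y₂ ω‖² dμ. Then for every θ₀ ∈ Θ, θ₀ is a global minimizer of R_N2N over Θ if and only if θ₀ is a global minimizer of R_N2C over Θ. -/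
open MeasureTheory ProbabilityTheory

lemma memL2_integrable_inner {Ω : Type*} [MeasurableSpace Ω] {μ : Measure Ω}
    {E : Type*} [NormedAddCommGroup E] [InnerProductSpace ℝ E]
    {f g : Ω → E} (hf : MemLp f 2 μ) (hg : MemLp g 2 μ) :
    Integrable (fun ω => (inner ℝ (f ω) (g ω) : ℝ)) μ := by
  have h := L2.integrable_inner (𝕜 := ℝ) (hf.toLp f) (hg.toLp g)
  refine h.congr ?_
  filter_upwards [hf.coeFn_toLp, hg.coeFn_toLp] with ω h1 h2
  rw [h1, h2]

theorem noise2noise_argmin_equivalence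
    {Ω : Type*} [MeasurableSpace Ω] {μ : Measure Ω} [IsProbabilityMeasure μ]
    {n : ℕ} (Y₁ X e₂ : Ω → EuclideanSpace ℝ (Fin n))
    (Y₂ : Ω → EuclideanSpace ℝ (Fin n)) (hY₂ : Y₂ = fun ω => X ω + e₂ ω)
    (he0 : ∫ ω, e₂ ω ∂μ = 0)
    (hindep : IndepFun (fun ω => (Y₁ ω, X ω)) e₂ μ)
    {Θ : Type*} (F : Θ → EuclideanSpace ℝ (Fin n) → EuclideanSpace ℝ (Fin n))
    (hF : ∀ θ, Measurable (F θ))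
    (hFY : ∀ θ, MemLp (fun ω => F θ (Y₁ ω)) 2 μ)
    (hX : MemLp X 2 μ) (he2 : MemLp e₂ 2 μ)
    (R_N2C : Θ → ℝ) (hR_N2C : R_N2C = fun θ => ∫ ω, ‖F θ (Y₁ ω) - X ω‖ ^ 2 ∂μ)
    (R_N2N : Θ → ℝ) (hR_N2N : R_N2N = fun θ => ∫ ω, ‖F θ (Y₁ ω) - Y₂ ω‖ ^ 2 ∂μ) :
    ∀ θ₀ : Θ, (∀ θ : Θ, R_N2N θ₀ ≤ R_N2N θ) ↔ (∀ θ : Θ, R_N2C θ₀ ≤ R_N2C θ) := by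
  -- Key: R_N2N θ = R_N2C θ + ∫ ‖e₂‖²
  have key : ∀ θ, R_N2N θ = R_N2C θ + ∫ ω, ‖e₂ ω‖ ^ 2 ∂μ := by
    intro θ
    set G : Ω → EuclideanSpace ℝ (Fin n) := fun ω => F θ (Y₁ ω) - X ω with hGdef
    have hG : MemLp G 2 μ := (hFY θ).sub hX
    -- pointwise expansion
    have hpt : ∀ ω, ‖F θ (Y₁ ω) - Y₂ ω‖ ^ 2
        = ‖G ω‖ ^ 2 - 2 * (inner ℝ (G ω) (e₂ ω) : ℝ) + ‖e₂ ω‖ ^ 2 := by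
      intro ω
      have : F θ (Y₁ ω) - Y₂ ω = G ω - e₂ ω := by
        simp only [hY₂, hGdef]; exact sub_add_eq_sub_sub _ _ _
      rw [this, norm_sub_sq_real]
    -- integrability
    have hiG : Integrable (fun ω => ‖G ω‖ ^ 2) μ := hG.norm.integrable_sq
    have hie : Integrable (fun ω => ‖e₂ ω‖ ^ 2) μ := he2.norm.integrable_sq
    have hiI : Integrable (fun ω => (inner ℝ (G ω) (e₂ ω) : ℝ)) μ :=
      memL2_integrable_inner hG he2
    -- cross term vanishes
    have hcross : ∫ ω, (inner ℝ (G ω) (e₂ ω) : ℝ) ∂μ = 0 := by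
      have hinner : ∀ ω, (inner ℝ (G ω) (e₂ ω) : ℝ)
          = ∑ i : Fin n, G ω i * e₂ ω i := by
        intro ω
        simp [PiLp.inner_apply, RCLike.inner_apply, conj_trivial, mul_comm]
      have hprod : ∀ i : Fin n, Integrable (fun ω => G ω i * e₂ ω i) μ := by
        intro i
        have h1 : MemLp (fun ω => G ω i) 2 μ :=
          (EuclideanSpace.proj i : EuclideanSpace ℝ (Fin n) →L[ℝ] ℝ).comp_memLp' hG
        have h2 : MemLp (fun ω => e₂ ω i) 2 μ :=
          (EuclideanSpace.proj i : EuclideanSpace ℝ (Fin n) →L[ℝ] ℝ).comp_memLp' he2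
        simpa [RCLike.inner_apply, conj_trivial, mul_comm] using
          memL2_integrable_inner h1 h2
      calc ∫ ω, (inner ℝ (G ω) (e₂ ω) : ℝ) ∂μ
          = ∫ ω, ∑ i : Fin n, G ω i * e₂ ω i ∂μ := by simp_rw [hinner]
        _ = ∑ i : Fin n, ∫ ω, G ω i * e₂ ω i ∂μ :=
            integral_finset_sum _ (fun i _ => hprod i)
        _ = 0 := by
            refine Finset.sum_eq_zero fun i _ => ?_
            have hind : IndepFun (fun ω => G ω i) (fun ω => e₂ ω i) μ := by
              have hφ : Measurable fun p : EuclideanSpace ℝ (Fin n) × EuclideanSpace ℝ (Fin n)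
                  => F θ p.1 i - p.2 i := by
                fun_prop
              have := hindep.comp hφ
                (by fun_prop : Measurable fun x : EuclideanSpace ℝ (Fin n) => x i)
              exact this
            have hmi : AEStronglyMeasurable (fun ω => G ω i) μ :=
              ((EuclideanSpace.proj i : EuclideanSpace ℝ (Fin n) →L[ℝ] ℝ).comp_memLp'
                hG).aestronglyMeasurable
            have hme : AEStronglyMeasurable (fun ω => e₂ ω i) μ :=
              ((EuclideanSpace.proj i : EuclideanSpace ℝ (Fin n) →L[ℝ] ℝ).comp_memLp'
                he2).aestronglyMeasurable
            rw [show (fun ω => G ω i * e₂ ω i) = ((fun ω => G ω i) * fun ω => e₂ ω i) from rfl,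
              hind.integral_mul_eq_mul_integral hmi hme]
            have : ∫ ω, e₂ ω i ∂μ = 0 := by
              have h := (EuclideanSpace.proj i :
                EuclideanSpace ℝ (Fin n) →L[ℝ] ℝ).integral_comp_comm
                (he2.integrable (by norm_num))
              rw [he0] at h
              simpa using h
            rw [this, mul_zero]
    rw [hR_N2N, hR_N2C]
    simp only
    calc ∫ ω, ‖F θ (Y₁ ω) - Y₂ ω‖ ^ 2 ∂μ
        = ∫ ω, (‖G ω‖ ^ 2 - 2 * (inner ℝ (G ω) (e₂ ω) : ℝ) + ‖e₂ ω‖ ^ 2) ∂μ := by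
          simp_rw [hpt]
      _ = (∫ ω, (‖G ω‖ ^ 2 - 2 * (inner ℝ (G ω) (e₂ ω) : ℝ)) ∂μ) + ∫ ω, ‖e₂ ω‖ ^ 2 ∂μ :=
          integral_add (hiG.sub (hiI.const_mul 2)) hie
      _ = (∫ ω, ‖G ω‖ ^ 2 ∂μ) - 2 * ∫ ω, (inner ℝ (G ω) (e₂ ω) : ℝ) ∂μ + ∫ ω, ‖e₂ ω‖ ^ 2 ∂μ := by
          rw [integral_sub hiG (hiI.const_mul 2), integral_const_mul]
      _ = (∫ ω, ‖G ω‖ ^ 2 ∂μ) + ∫ ω, ‖e₂ ω‖ ^ 2 ∂μ := by rw [hcross]; ring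
  intro θ₀
  constructor
  · intro h θ
    have := h θ
    simp [key] at this
    linarith
  · intro h θ
    have := h θ
    simp [key]
    linarith
end
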